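/- Let H = ⟨g, h⟩ be a non-Abelian nilpotent group of class 2 whose commutator subgroup ⟨c⟩ = ⟨(g,h)⟩ has order 2, and let K be a commutative ring. Define σ on H by σ(g) = gc, σ(h) = hc (extended to an anti-automorphism of order two fixing ζ(H)), and let f be trivial. Then KH is σ-normal: xx^σ = x^σx for all x ∈ KH. -/

import Mathlib

noncomputable def sigmaMap {K G : Type*} [CommRing K] [Group G] (σ : G → G) (f : G →* Kˣ)
    (x : MonoidAlgebra K G) : MonoidAlgebra K G :=
  Finsupp.sum x.coeff fun g a => MonoidAlgebra.single (σ g) (a * (f g : K))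

open scoped commutatorElement

theorem stmt_13 {K G : Type*} [CommRing K] [Group G] (g h : G)
    (hgen : Subgroup.closure ({g, h} : Set G) = ⊤)
    (hnab : g * h ≠ h * g)
    (hclass : (⊤ : Subgroup G).lowerCentralSeries 2 = ⊥)
    (hcomm : commutator G = Subgroup.zpowers (g⁻¹ * h⁻¹ * g * h))
    (hc2 : (g⁻¹ * h⁻¹ * g * h) ^ 2 = 1)
    (σ : G → G)
    (hanti : ∀ x y : G, σ (x * y) = σ y * σ x)
    (hord : ∀ x : G, σ (σ x) = x)
    (hσg : σ g = g * (g⁻¹ * h⁻¹ * g * h))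
    (hσh : σ h = h * (g⁻¹ * h⁻¹ * g * h))
    (hσz : ∀ z ∈ Subgroup.center G, σ z = z) :
    ∀ x : MonoidAlgebra K G,
      x * sigmaMap σ (1 : G →* Kˣ) x = sigmaMap σ (1 : G →* Kˣ) x * x := by
  classical
  obtain ⟨c, hcdef⟩ : ∃ c : G, c = g⁻¹ * h⁻¹ * g * h := ⟨_, rfl⟩
  rw [← hcdef] at hcomm hc2 hσg hσh
  -- commutator subgroup is central
  have hle : commutator G ≤ Subgroup.center G := by
    have h2 : (⁅commutator G, (⊤ : Subgroup G)⁆ : Subgroup G) = ⊥ := by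
      rw [← lowerCentralSeries_one]; exact hclass
    have h3 := Subgroup.commutator_eq_bot_iff_le_centralizer.mp h2
    rwa [Subgroup.coe_top, Subgroup.centralizer_univ] at h3
  have hcc : c ∈ Subgroup.center G := hle (by rw [hcomm]; exact Subgroup.mem_zpowers c)
  have hzc : ∀ {z : G}, z ∈ Subgroup.center G → ∀ y : G, z * y = y * z :=
    fun hz y => (Subgroup.mem_center_iff.mp hz y).symm
  have hmove : ∀ {w : G}, w ∈ Subgroup.center G → ∀ y t : G, w * (y * t) = y * (w * t) := by
    intro w hw y t
    rw [← mul_assoc, hzc hw y, mul_assoc]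
  have hcmul : c * c = 1 := by rw [← pow_two]; exact hc2
  -- swapping any two elements costs a central square-one factor
  have hswap : ∀ x y : G, ∃ w : G, w ∈ Subgroup.center G ∧ w * w = 1 ∧ x * y = w * (y * x) := by
    intro x y
    have hmem : ⁅x, y⁆ ∈ commutator G :=
      Subgroup.commutator_mem_commutator (Subgroup.mem_top x) (Subgroup.mem_top y)
    rw [hcomm] at hmem
    obtain ⟨k, hk⟩ := Subgroup.mem_zpowers_iff.mp hmem
    refine ⟨⁅x, y⁆, hle (by rw [hcomm]; exact hmem), ?_, ?_⟩
    · rw [← hk, ← zpow_add, ← two_mul, zpow_mul]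
      have : c ^ (2 : ℤ) = 1 := by
        rw [show (2:ℤ) = ((2:ℕ):ℤ) from rfl, zpow_natCast, hc2]
      rw [this, one_zpow]
    · rw [commutatorElement_def]; group
  -- decomposition u = g^a * (h^b * z) with z central
  have hdecomp : ∀ u : G, ∃ (a b : ℤ) (z : G), z ∈ Subgroup.center G ∧ u = g ^ a * (h ^ b * z) := by
    intro u
    set Z := Subgroup.center G
    let π := QuotientGroup.mk' Z
    have hcomQ : Commute (π g) (π h) := by
      have h1 : g * h = (h * g) * c := by rw [hcdef]; group
      have h2 : π c = 1 := by
        rw [QuotientGroup.mk'_apply, QuotientGroup.eq_one_iff]; exact hcc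
      show π g * π h = π h * π g
      rw [← map_mul, ← map_mul, h1, map_mul, h2, mul_one]
    have hmemQ : π u ∈ Subgroup.closure ({π g, π h} : Set (G ⧸ Z)) := by
      have h1 : π u ∈ Subgroup.map π (Subgroup.closure ({g, h} : Set G)) := by
        rw [hgen]; exact ⟨u, trivial, rfl⟩
      rw [MonoidHom.map_closure, Set.image_insert_eq, Set.image_singleton] at h1
      exact h1
    have habform : ∀ q ∈ Subgroup.closure ({π g, π h} : Set (G ⧸ Z)),
        ∃ a b : ℤ, q = π g ^ a * π h ^ b := by
      intro q hq
      let T : Subgroup (G ⧸ Z) :=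
        { carrier := {q | ∃ a b : ℤ, q = π g ^ a * π h ^ b}
          one_mem' := ⟨0, 0, by simp⟩
          mul_mem' := by
            rintro u v ⟨a, b, rfl⟩ ⟨a', b', rfl⟩
            refine ⟨a + a', b + b', ?_⟩
            rw [zpow_add, zpow_add]
            exact (hcomQ.symm.zpow_zpow b a').mul_mul_mul_comm _ _
          inv_mem' := by
            rintro u ⟨a, b, rfl⟩
            refine ⟨-a, -b, ?_⟩
            rw [mul_inv_rev, ← zpow_neg, ← zpow_neg]
            exact (hcomQ.symm.zpow_zpow (-b) (-a)).eq
        }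
      have hT : Subgroup.closure ({π g, π h} : Set (G ⧸ Z)) ≤ T := by
        rw [Subgroup.closure_le]
        rintro y (rfl | rfl)
        · exact ⟨1, 0, by simp⟩
        · exact ⟨0, 1, by simp⟩
      exact hT hq
    obtain ⟨a, b, hab⟩ := habform _ hmemQ
    refine ⟨a, b, (g ^ a * h ^ b)⁻¹ * u, ?_, by group⟩
    have : π ((g ^ a * h ^ b)⁻¹ * u) = 1 := by
      rw [map_mul, map_inv, map_mul, map_zpow, map_zpow, hab]
      group
    rwa [QuotientGroup.mk'_apply, QuotientGroup.eq_one_iff] at this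
  -- every square is central
  have hsq : ∀ x : G, x * x ∈ Subgroup.center G := by
    intro x
    rw [Subgroup.mem_center_iff]
    intro y
    obtain ⟨w, hw, hw2, hyx⟩ := hswap y x
    calc y * (x * x) = (y * x) * x := by rw [mul_assoc]
      _ = (w * (x * y)) * x := by rw [hyx]
      _ = w * (x * (y * x)) := by rw [mul_assoc, mul_assoc]
      _ = w * (x * (w * (x * y))) := by rw [hyx]
      _ = w * (w * (x * (x * y))) := by rw [hmove hw x (x*y)]
      _ = (w * w) * (x * (x * y)) := by rw [mul_assoc]
      _ = x * x * y := by rw [hw2, one_mul, mul_assoc]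
  -- key dichotomy
  have hE : ∀ u : G, u ∈ Subgroup.center G ∨ σ u = u * c := by
    intro u
    obtain ⟨a, b, z, hz, rfl⟩ := hdecomp u
    have hg2 : g ^ (2:ℤ) = g * g := by
      rw [show (2:ℤ) = ((2:ℕ):ℤ) from rfl, zpow_natCast, pow_two]
    have hh2 : h ^ (2:ℤ) = h * h := by
      rw [show (2:ℤ) = ((2:ℕ):ℤ) from rfl, zpow_natCast, pow_two]
    have hga : g ^ a = g ^ (a % 2) * (g ^ (2:ℤ)) ^ (a / 2) := by
      conv_lhs => rw [← Int.emod_add_mul_ediv a 2]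
      rw [zpow_add, zpow_mul]
    have hhb : h ^ b = h ^ (b % 2) * (h ^ (2:ℤ)) ^ (b / 2) := by
      conv_lhs => rw [← Int.emod_add_mul_ediv b 2]
      rw [zpow_add, zpow_mul]
    have hgq : (g ^ (2:ℤ)) ^ (a / 2) ∈ Subgroup.center G := by
      rw [hg2]; exact Subgroup.zpow_mem _ (hsq g) _
    have hhp : (h ^ (2:ℤ)) ^ (b / 2) ∈ Subgroup.center G := by
      rw [hh2]; exact Subgroup.zpow_mem _ (hsq h) _
    obtain ⟨z₂, hz₂, hz₂def⟩ : ∃ z₂ : G, z₂ ∈ Subgroup.center G ∧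
        g ^ a * (h ^ b * z) = g ^ (a % 2) * (h ^ (b % 2) * z₂) := by
      refine ⟨(g ^ (2:ℤ)) ^ (a / 2) * ((h ^ (2:ℤ)) ^ (b / 2) * z),
        Subgroup.mul_mem _ hgq (Subgroup.mul_mem _ hhp hz), ?_⟩
      rw [hga, hhb]
      simp only [mul_assoc]
      rw [hmove hgq (h ^ (b % 2))]
    rw [hz₂def]
    have hσz₂ : σ z₂ = z₂ := hσz z₂ hz₂
    have hcinv : c⁻¹ = c := inv_eq_of_mul_eq_one_right hcmul
    have hhg : h * g = g * (h * c) := by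
      have h1 : g * h = h * g * c := by rw [hcdef]; group
      have h2 : h * g = g * h * c⁻¹ := by rw [h1]; group
      rw [h2, hcinv, mul_assoc]
    rcases Int.emod_two_eq_zero_or_one a with ha | ha <;>
      rcases Int.emod_two_eq_zero_or_one b with hb | hb <;> rw [ha, hb]
    · left; simpa using hz₂
    · right
      have : g ^ (0:ℤ) * (h ^ (1:ℤ) * z₂) = h * z₂ := by group
      rw [this, hanti, hσz₂, hσh]
      rw [mul_assoc, hmove hz₂ h c, ← mul_assoc]
    · right
      have : g ^ (1:ℤ) * (h ^ (0:ℤ) * z₂) = g * z₂ := by group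
      rw [this, hanti, hσz₂, hσg]
      rw [mul_assoc, hmove hz₂ g c, ← mul_assoc]
    · right
      have e1 : g ^ (1:ℤ) * (h ^ (1:ℤ) * z₂) = g * h * z₂ := by group
      rw [e1, hanti, hσz₂, hanti, hσh, hσg]
      calc z₂ * (h * c * (g * c)) = z₂ * (h * (c * (g * c))) := by rw [mul_assoc]
        _ = z₂ * (h * (g * (c * c))) := by rw [hmove hcc g c]
        _ = z₂ * (h * g) := by rw [hcmul, mul_one]
        _ = z₂ * (g * (h * c)) := by rw [hhg]
        _ = g * (z₂ * (h * c)) := by rw [hmove hz₂]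
        _ = g * (h * (z₂ * c)) := by rw [hmove hz₂]
        _ = g * h * z₂ * c := by simp only [mul_assoc]
  -- now the algebra part
  intro x
  have hone : ∀ u : G, (((1 : G →* Kˣ) u : Kˣ) : K) = 1 := by intro u; simp
  set p : G → Prop := fun u => u ∈ Subgroup.center G with hp
  obtain ⟨xz, hxzdef⟩ : ∃ v : MonoidAlgebra K G, v = MonoidAlgebra.ofCoeff (Finsupp.filter p x.coeff) := ⟨_, rfl⟩
  obtain ⟨xn, hxndef⟩ : ∃ v : MonoidAlgebra K G, v = MonoidAlgebra.ofCoeff (Finsupp.filter (fun u => ¬ p u) x.coeff) := ⟨_, rfl⟩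
  have hD : x = xz + xn := by
    rw [hxzdef, hxndef, ← MonoidAlgebra.ofCoeff_add, Finsupp.filter_pos_add_filter_neg]
  obtain ⟨Cc, hCcdef⟩ : ∃ v : MonoidAlgebra K G, v = MonoidAlgebra.single c 1 := ⟨_, rfl⟩
  -- singles at central elements are central
  have hsingle_comm : ∀ z : G, z ∈ Subgroup.center G → ∀ (b : K) (y : MonoidAlgebra K G),
      MonoidAlgebra.single z b * y = y * MonoidAlgebra.single z b := by
    intro z hz b y
    induction y using MonoidAlgebra.induction_linear with
    | zero => simp
    | add f f' hf hf' =>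
      rw [mul_add, add_mul, hf, hf']
    | single v d =>
      rw [MonoidAlgebra.single_mul_single, MonoidAlgebra.single_mul_single,
        Subgroup.mem_center_iff.mp hz v, mul_comm b d]
  have hCc_comm : ∀ y : MonoidAlgebra K G, Cc * y = y * Cc := by
    intro y; rw [hCcdef]; exact hsingle_comm c hcc 1 y
  have hxz_supp : ∀ u ∈ xz.coeff.support, u ∈ Subgroup.center G := by
    intro u hu
    rw [hxzdef, MonoidAlgebra.coeff_ofCoeff, Finsupp.support_filter, Finset.mem_filter] at hu
    exact hu.2
  have hxn_supp : ∀ u ∈ xn.coeff.support, ¬ u ∈ Subgroup.center G := by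
    intro u hu
    rw [hxndef, MonoidAlgebra.coeff_ofCoeff, Finsupp.support_filter, Finset.mem_filter] at hu
    exact hu.2
  have hxz_comm : ∀ y : MonoidAlgebra K G, xz * y = y * xz := by
    intro y
    conv_lhs => rw [← MonoidAlgebra.sum_coeff_single xz]
    conv_rhs => rw [← MonoidAlgebra.sum_coeff_single xz]
    rw [Finsupp.sum_mul, Finsupp.mul_sum]
    exact Finsupp.sum_congr fun u hu => hsingle_comm u (hxz_supp u hu) _ y
  -- computing sigmaMap
  have hadd : sigmaMap σ (1 : G →* Kˣ) x = sigmaMap σ (1 : G →* Kˣ) xz + sigmaMap σ (1 : G →* Kˣ) xn := by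
    rw [hD]
    unfold sigmaMap
    rw [MonoidAlgebra.coeff_add]
    refine Finsupp.sum_add_index' (fun u => by simp) (fun u b₁ b₂ => by
      rw [add_mul]; exact MonoidAlgebra.single_add _ _ _)
  have hz_eq : sigmaMap σ (1 : G →* Kˣ) xz = xz := by
    unfold sigmaMap
    rw [Finsupp.sum_congr (g2 := fun u a => MonoidAlgebra.single u a) ?_, MonoidAlgebra.sum_coeff_single]
    intro u hu
    rw [hone u, mul_one, hσz u (hxz_supp u hu)]
  have hn_eq : sigmaMap σ (1 : G →* Kˣ) xn = xn * Cc := by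
    unfold sigmaMap
    rw [Finsupp.sum_congr (g2 := fun u a => MonoidAlgebra.single u a * Cc) ?_]
    · rw [← Finsupp.sum_mul, MonoidAlgebra.sum_coeff_single]
    · intro u hu
      have hσu : σ u = u * c := (hE u).resolve_left (hxn_supp u hu)
      simp only [hCcdef, MonoidAlgebra.single_mul_single, mul_one, hσu, hone u]
  -- conclude
  have key : (xz + xn) * (xz + xn * Cc) = (xz + xn * Cc) * (xz + xn) := by
    have h1 := hxz_comm (xn * Cc)
    have h2 := hxz_comm xn
    have h3 : xn * (xn * Cc) = xn * Cc * xn := by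
      rw [mul_assoc xn Cc xn, hCc_comm xn]
    simp only [add_mul, mul_add]
    rw [h1, ← h2, h3]
    abel
  rw [hadd, hz_eq, hn_eq, hD]
  exact key
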